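/- Let n ≥ 2 be an integer and let ε be a real number with 0 ≤ ε < 1. In the formal power series ring ℝ[[t]], consider the series G(t) = (1 − t)^{n−1} · (1 − 2t)^{−(n+1)} · ((1−ε) + εt)^{n²} · ∏_{l=2}^{n−1} (1 − ((l+1)/l)·t)^{−(n+1)}, where the inverses exist because each factor of the form 1 − c·t is a unit in ℝ[[t]]. Then every coefficient of G is nonnegative, and the coefficient of t^n in G is strictly positive. -/

import Mathlib

open Finset PowerSeries

/-- The formal power series
`G(t) = (1 - t)^(n-1) · (1 - 2t)^{-(n+1)} · ((1-ε) + εt)^(n²) ·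
        ∏_{l=2}^{n-1} (1 - ((l+1)/l)·t)^{-(n+1)}`
in `ℝ[[t]]`; each factor of the form `1 - c·t` has nonzero constant coefficient and
hence is invertible in `ℝ[[t]]`. -/
noncomputable def residueSeries (n : ℕ) (ε : ℝ) : PowerSeries ℝ :=
  (1 - PowerSeries.X) ^ (n - 1) *
    ((1 - 2 * PowerSeries.X) ^ (n + 1))⁻¹ *
    (PowerSeries.C (1 - ε) + PowerSeries.C ε * PowerSeries.X) ^ (n ^ 2) *
    ∏ l ∈ Finset.Icc 2 (n - 1),
      ((1 - PowerSeries.C (((l : ℝ) + 1) / (l : ℝ)) * PowerSeries.X) ^ (n + 1))⁻¹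

namespace ResidueAux

lemma constCoeff_oneSub (c : ℝ) :
    constantCoeff (1 - PowerSeries.C c * X) ≠ 0 := by simp

lemma geom (c : ℝ) :
    (1 - PowerSeries.C c * X)⁻¹ = PowerSeries.mk (fun k => c ^ k) := by
  rw [PowerSeries.inv_eq_iff_mul_eq_one (constCoeff_oneSub c)]
  ext j
  cases j with
  | zero => simp
  | succ m =>
    rw [mul_sub, mul_one, map_sub, show (PowerSeries.mk fun k => c ^ k) *
        (PowerSeries.C c * X) = ((PowerSeries.mk fun k => c ^ k) * X) * PowerSeries.C c
        from by ring, PowerSeries.coeff_mul_C, PowerSeries.coeff_succ_mul_X]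
    simp [pow_succ, mul_comm]

lemma coeff_geom (c : ℝ) (k : ℕ) :
    PowerSeries.coeff k (1 - PowerSeries.C c * X)⁻¹ = c ^ k := by
  rw [geom]; simp

lemma inv_pow_oneSub (c : ℝ) (m : ℕ) :
    ((1 - PowerSeries.C c * X) ^ m)⁻¹ = ((1 - PowerSeries.C c * X)⁻¹) ^ m := by
  rw [PowerSeries.inv_eq_iff_mul_eq_one (by simp)]
  rw [← mul_pow, PowerSeries.inv_mul_cancel _ (constCoeff_oneSub c), one_pow]

/-- the key algebraic identity `(1 - X) * (1 - 2X)⁻¹ = 1 + X * (1 - 2X)⁻¹`. -/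
lemma key_identity :
    (1 - X) * (1 - PowerSeries.C (2:ℝ) * X)⁻¹ =
      1 + X * (1 - PowerSeries.C (2:ℝ) * X)⁻¹ := by
  have h1 : (1 - X : ℝ⟦X⟧) = (1 - PowerSeries.C (2:ℝ) * X) + X := by
    rw [map_ofNat]; ring
  rw [h1, add_mul, PowerSeries.mul_inv_cancel _ (constCoeff_oneSub 2)]

/-- Nonnegativity predicate for power series coefficients. -/
def Nonneg (f : ℝ⟦X⟧) : Prop := ∀ j : ℕ, 0 ≤ PowerSeries.coeff j f

lemma Nonneg.mul {f g : ℝ⟦X⟧} (hf : Nonneg f) (hg : Nonneg g) : Nonneg (f * g) := by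
  intro j
  rw [PowerSeries.coeff_mul]
  exact Finset.sum_nonneg fun p _ => mul_nonneg (hf p.1) (hg p.2)

lemma nonneg_one : Nonneg (1 : ℝ⟦X⟧) := by
  intro j; rw [PowerSeries.coeff_one]; positivity

lemma Nonneg.pow {f : ℝ⟦X⟧} (hf : Nonneg f) (m : ℕ) : Nonneg (f ^ m) := by
  induction m with
  | zero => simpa using nonneg_one
  | succ k ih => rw [pow_succ]; exact ih.mul hf

lemma Nonneg.geomInv {c : ℝ} (hc : 0 ≤ c) :
    Nonneg (1 - PowerSeries.C c * X)⁻¹ := by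
  intro j; rw [coeff_geom]; positivity

lemma coeff_pos_mul {f g : ℝ⟦X⟧} (hf : Nonneg f) (hg : Nonneg g) (n : ℕ)
    (hfn : 0 < PowerSeries.coeff n f) (hg0 : 0 < PowerSeries.coeff 0 g) :
    0 < PowerSeries.coeff n (f * g) := by
  rw [PowerSeries.coeff_mul]
  have hmem : ((n, 0) : ℕ × ℕ) ∈ Finset.HasAntidiagonal.antidiagonal n := by simp
  have := Finset.single_le_sum
    (f := fun p : ℕ × ℕ => PowerSeries.coeff p.1 f * PowerSeries.coeff p.2 g)
    (fun p _ => mul_nonneg (hf p.1) (hg p.2)) hmem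
  exact lt_of_lt_of_le (mul_pos hfn hg0) this

end ResidueAux

open ResidueAux

/-- For `n ≥ 2` and `0 ≤ ε < 1`, every coefficient of the power series `G(t)` is
nonnegative, and the coefficient of `t^n` is strictly positive. -/
theorem residueSeries_coeff_nonneg (n : ℕ) (hn : 2 ≤ n) (ε : ℝ)
    (hε0 : 0 ≤ ε) (hε1 : ε < 1) :
    (∀ j : ℕ, 0 ≤ PowerSeries.coeff j (residueSeries n ε)) ∧
    0 < PowerSeries.coeff n (residueSeries n ε) := by
  -- rewrite the series in a manifestly nonnegative form
  set u : ℝ⟦X⟧ := (1 - PowerSeries.C (2:ℝ) * X)⁻¹ with hu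
  set H : ℝ⟦X⟧ :=
    (1 + X * u) ^ (n - 1) * u *
    (PowerSeries.C (1 - ε) + PowerSeries.C ε * X) ^ (n ^ 2) *
    ∏ l ∈ Finset.Icc 2 (n - 1),
      ((1 - PowerSeries.C (((l : ℝ) + 1) / (l : ℝ)) * X)⁻¹) ^ (n + 1) with hH
  have hC2 : (2 : ℝ⟦X⟧) = PowerSeries.C (2:ℝ) := (map_ofNat _ 2).symm
  have hkey : residueSeries n ε = u * H := by
    rw [residueSeries, hH, hu, hC2, inv_pow_oneSub]
    have hsplit : ((1 - PowerSeries.C (2:ℝ) * X)⁻¹) ^ (n + 1) =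
        ((1 - PowerSeries.C (2:ℝ) * X)⁻¹) ^ (n - 1) *
        ((1 - PowerSeries.C (2:ℝ) * X)⁻¹) ^ 2 := by
      rw [← pow_add]
      congr 1
      omega
    rw [hsplit]
    have hmp : (1 - X : ℝ⟦X⟧) ^ (n - 1) * ((1 - PowerSeries.C (2:ℝ) * X)⁻¹) ^ (n - 1) =
        ((1 - X) * (1 - PowerSeries.C (2:ℝ) * X)⁻¹) ^ (n - 1) := (mul_pow _ _ _).symm
    have hprod : ∀ l ∈ Finset.Icc 2 (n - 1),
        ((1 - PowerSeries.C (((l : ℝ) + 1) / (l : ℝ)) * X) ^ (n + 1))⁻¹ =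
        ((1 - PowerSeries.C (((l : ℝ) + 1) / (l : ℝ)) * X)⁻¹) ^ (n + 1) :=
      fun l _ => inv_pow_oneSub _ _
    rw [Finset.prod_congr rfl hprod]
    calc (1 - X : ℝ⟦X⟧) ^ (n - 1) *
          (((1 - PowerSeries.C (2:ℝ) * X)⁻¹) ^ (n - 1) *
            ((1 - PowerSeries.C (2:ℝ) * X)⁻¹) ^ 2) *
          (PowerSeries.C (1 - ε) + PowerSeries.C ε * X) ^ n ^ 2 *
          ∏ l ∈ Finset.Icc 2 (n - 1),
            ((1 - PowerSeries.C (((l : ℝ) + 1) / (l : ℝ)) * X)⁻¹) ^ (n + 1)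
        = (1 - PowerSeries.C (2:ℝ) * X)⁻¹ *
          ((((1 - X) * (1 - PowerSeries.C (2:ℝ) * X)⁻¹) ^ (n - 1) *
            (1 - PowerSeries.C (2:ℝ) * X)⁻¹) *
          (PowerSeries.C (1 - ε) + PowerSeries.C ε * X) ^ n ^ 2 *
          ∏ l ∈ Finset.Icc 2 (n - 1),
            ((1 - PowerSeries.C (((l : ℝ) + 1) / (l : ℝ)) * X)⁻¹) ^ (n + 1)) := by
          rw [← hmp]; ring
      _ = _ := by rw [key_identity]
  -- nonnegativity of all the pieces
  have hu_nonneg : Nonneg u := Nonneg.geomInv (by norm_num)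
  have h1 : Nonneg (1 + X * u) := by
    intro j
    cases j with
    | zero => simp
    | succ m =>
      rw [map_add, PowerSeries.coeff_one, PowerSeries.coeff_succ_X_mul]
      simpa using hu_nonneg m
  have hlin : Nonneg (PowerSeries.C (1 - ε) + PowerSeries.C ε * X) := by
    intro j
    rw [map_add, PowerSeries.coeff_C]
    rcases j with _ | m
    · simp; linarith
    · rw [if_neg (Nat.succ_ne_zero _), zero_add, PowerSeries.coeff_C_mul,
        PowerSeries.coeff_X]
      split <;> simp [hε0]
  have hprod_nonneg : Nonneg (∏ l ∈ Finset.Icc 2 (n - 1),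
      ((1 - PowerSeries.C (((l : ℝ) + 1) / (l : ℝ)) * X)⁻¹) ^ (n + 1)) := by
    refine Finset.prod_induction _ Nonneg (fun a b ha hb => ha.mul hb) nonneg_one ?_
    intro l hl
    have hl2 : 2 ≤ l := (Finset.mem_Icc.mp hl).1
    have : (0 : ℝ) ≤ ((l : ℝ) + 1) / (l : ℝ) := by positivity
    exact (Nonneg.geomInv this).pow _
  have hH_nonneg : Nonneg H := by
    rw [hH]
    exact (((h1.pow _).mul hu_nonneg).mul (hlin.pow _)).mul hprod_nonneg
  have hG_nonneg : Nonneg (residueSeries n ε) := by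
    rw [hkey]; exact hu_nonneg.mul hH_nonneg
  refine ⟨hG_nonneg, ?_⟩
  -- strict positivity of the coefficient of t^n
  have hun : 0 < PowerSeries.coeff n u := by
    rw [hu, coeff_geom]; positivity
  have hH0 : 0 < PowerSeries.coeff 0 H := by
    rw [PowerSeries.coeff_zero_eq_constantCoeff, hH]
    rw [map_mul, map_mul, map_mul, map_pow, map_pow]
    rw [map_prod]
    have hc1 : constantCoeff (1 + X * u) = 1 := by simp
    have hc2 : constantCoeff u = 1 := by
      rw [hu, PowerSeries.constantCoeff_inv]; simp
    have hc3 : constantCoeff (PowerSeries.C (1 - ε) + PowerSeries.C ε * X) = 1 - ε := by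
      simp
    have hc4 : ∀ l ∈ Finset.Icc 2 (n - 1),
        constantCoeff (((1 - PowerSeries.C (((l : ℝ) + 1) / (l : ℝ)) * X)⁻¹) ^ (n + 1))
          = 1 := by
      intro l hl
      rw [map_pow, PowerSeries.constantCoeff_inv]
      simp
    rw [hc1, hc2, hc3, Finset.prod_congr rfl hc4, Finset.prod_const_one]
    have : (0:ℝ) < 1 - ε := by linarith
    simp [this]
  rw [hkey]
  exact coeff_pos_mul hu_nonneg hH_nonneg n hun hH0
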